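/- arXiv:1907.08587 — 5 statements merged into one kernel-verified Lean document; each statement's English description precedes it below -/
import Mathlib

section
/- Let P be a real symmetric positive definite 3×3 matrix with three distinct eigenvalues, and let v₁, v₂, v₃ be unit eigenvectors of P corresponding to its three eigenvalues. Then for any R ∈ SO(3), the matrix PR − RᵀP equals zero if and only if R belongs to the set Θ = {I, exp(π v̂₁), exp(π v̂₂), exp(π v̂₃)}. (Equivalently, the configuration error function ψ(R) = ½ tr(P(I − R)) has exactly these 4 critical points on SO(3).) -/
open Matrix NormedSpace
open scoped Nat

/-- The hat map sending `v ∈ ℝ³` to the skew-symmetric matrix `v̂` with `v̂ w = v × w`. -/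
def hat (v : Fin 3 → ℝ) : Matrix (Fin 3) (Fin 3) ℝ :=
  !![0, -v 2, v 1; v 2, 0, -v 0; -v 1, v 0, 0]

/-- `SO(3)`: real 3×3 matrices with `RᵀR = I` and `det R = 1`. -/
def SO3 : Set (Matrix (Fin 3) (Fin 3) ℝ) := {R | Rᵀ * R = 1 ∧ R.det = 1}

lemma hat_sq (v : Fin 3 → ℝ) (hv : v ⬝ᵥ v = 1) :
    hat v * hat v = vecMulVec v v - 1 := by
  have hv' : v 0 * v 0 + v 1 * v 1 + v 2 * v 2 = 1 := by
    simpa [dotProduct, Fin.sum_univ_three] using hv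
  ext i j
  fin_cases i <;> fin_cases j <;>
    simp [hat, Matrix.mul_apply, Fin.sum_univ_three, vecMulVec_apply, Matrix.one_apply] <;>
    nlinarith [hv']

lemma vecMulVec_mul_hat (v : Fin 3 → ℝ) : vecMulVec v v * hat v = 0 := by
  ext i j
  fin_cases i <;> fin_cases j <;>
    simp [hat, Matrix.mul_apply, Fin.sum_univ_three, vecMulVec_apply] <;> ring

lemma hat_cube (v : Fin 3 → ℝ) (hv : v ⬝ᵥ v = 1) :
    hat v * hat v * hat v = -hat v := by
  rw [hat_sq v hv, sub_mul, vecMulVec_mul_hat, one_mul, zero_sub]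

lemma pow_odd_of_cube {A : Matrix (Fin 3) (Fin 3) ℝ} (hA : A * A * A = -A) (k : ℕ) :
    A ^ (2 * k + 1) = ((-1 : ℝ) ^ k) • A := by
  induction k with
  | zero => simp
  | succ n ih =>
    have h : 2 * (n + 1) + 1 = (2 * n + 1) + 2 := by ring
    rw [h, pow_add, ih, pow_two, smul_mul_assoc, ← mul_assoc, hA, pow_succ, smul_neg,
      ← neg_smul, mul_neg_one]

lemma pow_even_of_cube {A : Matrix (Fin 3) (Fin 3) ℝ} (hA : A * A * A = -A) (k : ℕ) :
    A ^ (2 * k + 2) = ((-1 : ℝ) ^ k) • (A * A) := by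
  have h : 2 * k + 2 = (2 * k + 1) + 1 := by ring
  rw [h, pow_succ, pow_odd_of_cube hA, smul_mul_assoc]

lemma exp_pi_of_cube {A : Matrix (Fin 3) (Fin 3) ℝ} (hA : A * A * A = -A) :
    NormedSpace.exp (Real.pi • A) = 1 + (2 : ℝ) • (A * A) := by
  have hf : ∀ n : ℕ, ((n ! : ℝ)⁻¹) • (Real.pi • A) ^ n
      = (Real.pi ^ n * ((n !: ℝ))⁻¹) • A ^ n := by
    intro n
    rw [smul_pow, smul_smul, mul_comm]
  have hc : HasSum (fun k : ℕ => (-1 : ℝ) ^ k * Real.pi ^ (2 * k) / (2 * k)!) (-1) := by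
    simpa [Real.cos_pi] using Real.hasSum_cos Real.pi
  have hc1 : HasSum (fun k : ℕ => (-1 : ℝ) ^ (k + 1) * Real.pi ^ (2 * (k + 1)) / (2 * (k + 1))!)
      (-2) := by
    refine (hasSum_nat_add_iff
      (f := fun k : ℕ => (-1 : ℝ) ^ k * Real.pi ^ (2 * k) / (2 * k)!) 1).mpr ?_
    have hsum : ∑ i ∈ Finset.range 1, ((-1 : ℝ) ^ i * Real.pi ^ (2 * i) / (2 * i)!) = 1 := by
      norm_num
    rw [hsum, show (-2 : ℝ) + 1 = -1 from by norm_num]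
    exact hc
  have hc2 : HasSum (fun k : ℕ => (-1 : ℝ) ^ k * Real.pi ^ (2 * k + 2) / (2 * k + 2)!) 2 := by
    have := hc1.neg
    rw [neg_neg] at this
    have heq : (fun k : ℕ => (-1 : ℝ) ^ k * Real.pi ^ (2 * k + 2) / (2 * k + 2)!)
        = (fun k : ℕ => -((-1 : ℝ) ^ (k + 1) * Real.pi ^ (2 * (k + 1)) / (2 * (k + 1))!)) := by
      funext k
      have h1 : 2 * (k + 1) = 2 * k + 2 := by ring
      rw [h1]
      ring
    rw [heq]
    exact this
  have hs : HasSum (fun k : ℕ => (-1 : ℝ) ^ k * Real.pi ^ (2 * k + 1) / (2 * k + 1)!) 0 := by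
    simpa [Real.sin_pi] using Real.hasSum_sin Real.pi
  set f : ℕ → Matrix (Fin 3) (Fin 3) ℝ := fun n => ((n ! : ℝ)⁻¹) • (Real.pi • A) ^ n with hfdef
  have heven' : HasSum (fun k : ℕ => f (2 * (k + 1))) ((2 : ℝ) • (A * A)) := by
    convert hc2.smul_const (A * A) using 2 with k
    rw [hfdef]
    simp only
    rw [hf, show 2 * (k + 1) = 2 * k + 2 from by ring, pow_even_of_cube hA, smul_smul]
    congr 1
    ring
  have heven : HasSum (fun k : ℕ => f (2 * k)) ((2 : ℝ) • (A * A) + 1) := by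
    have h0 : f 0 = 1 := by simp [hfdef]
    have h2 := (hasSum_nat_add_iff (f := fun k => f (2 * k))
      (g := (2 : ℝ) • (A * A)) 1).mp heven'
    simpa [h0] using h2
  have hodd : HasSum (fun k : ℕ => f (2 * k + 1)) 0 := by
    have := hs.smul_const A
    rw [zero_smul] at this
    convert this using 2 with k
    rw [hfdef]
    simp only
    rw [hf, pow_odd_of_cube hA, smul_smul]
    congr 1
    ring
  have htot : HasSum f (((2 : ℝ) • (A * A) + 1) + 0) := heven.even_add_odd hodd
  rw [add_zero] at htot
  rw [exp_eq_tsum (𝕂 := ℝ)]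
  exact htot.tsum_eq.trans (add_comm _ _)

lemma rodrigues (v : Fin 3 → ℝ) (hv : v ⬝ᵥ v = 1) :
    NormedSpace.exp (Real.pi • hat v) = (2 : ℝ) • vecMulVec v v - 1 := by
  rw [exp_pi_of_cube (hat_cube v hv), hat_sq v hv, smul_sub]
  ext i j
  simp [Matrix.one_apply]
  split_ifs <;> ring

lemma S_offdiag (μv : Fin 3 → ℝ) (hpos : ∀ i, 0 < μv i)
    (hne : ∀ i j, i ≠ j → μv i ≠ μv j)
    (S : Matrix (Fin 3) (Fin 3) ℝ) (hS : Sᵀ * S = 1)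
    (hDS : diagonal μv * S = Sᵀ * diagonal μv) :
    ∀ i j, i ≠ j → S i j = 0 := by
  have hSS : S * Sᵀ = 1 := mul_eq_one_comm.mp hS
  set D : Matrix (Fin 3) (Fin 3) ℝ := diagonal μv with hD
  have hM2 : (D * S) * (D * S) = D * D := by
    calc (D * S) * (D * S) = D * (S * (Sᵀ * D)) := by rw [← hDS]; noncomm_ring
    _ = D * ((S * Sᵀ) * D) := by rw [mul_assoc]
    _ = D * D := by rw [hSS, one_mul]
  have hcomm : (D * S) * (D * D) = (D * D) * (D * S) := by
    calc (D * S) * (D * D) = (D * S) * ((D * S) * (D * S)) := by rw [hM2]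
    _ = ((D * S) * (D * S)) * (D * S) := by noncomm_ring
    _ = (D * D) * (D * S) := by rw [hM2]
  intro i j hij
  have h : ((D * S) * (D * D)) i j = ((D * D) * (D * S)) i j := by rw [hcomm]
  simp only [hD, diagonal_mul_diagonal, mul_diagonal, diagonal_mul] at h
  have hfact : μv i * S i j * (μv j * μv j - μv i * μv i) = 0 := by linear_combination h
  have hne2 : μv j * μv j - μv i * μv i ≠ 0 := by
    have h1 := hne i j hij
    have h2 := hpos i
    have h3 := hpos j
    intro hcon
    apply h1
    nlinarith
  rcases mul_eq_zero.mp hfact with h' | h'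
  · rcases mul_eq_zero.mp h' with h'' | h''
    · exact absurd h'' (ne_of_gt (hpos i))
    · exact h''
  · exact absurd h' hne2

lemma comm_aux (P : Matrix (Fin 3) (Fin 3) ℝ) (hPsymm : P.IsSymm)
    (μ : ℝ) (v : Fin 3 → ℝ) (hev : P *ᵥ v = μ • v) :
    P * ((2 : ℝ) • vecMulVec v v - 1) - ((2 : ℝ) • vecMulVec v v - 1)ᵀ * P = 0 := by
  have hsum : ∀ i, ∑ x, P i x * v x = μ * v i := by
    intro i
    have h := congrFun hev i
    simpa [mulVec, dotProduct] using h
  have h1 : P * vecMulVec v v = μ • vecMulVec v v := by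
    ext i j
    simp only [Matrix.mul_apply, vecMulVec_apply, Matrix.smul_apply, smul_eq_mul]
    calc ∑ x, P i x * (v x * v j) = (∑ x, P i x * v x) * v j := by
          rw [Finset.sum_mul]; exact Finset.sum_congr rfl fun k _ => by ring
    _ = μ * (v i * v j) := by rw [hsum i]; ring
  have h2 : vecMulVec v v * P = μ • vecMulVec v v := by
    ext i j
    simp only [Matrix.mul_apply, vecMulVec_apply, Matrix.smul_apply, smul_eq_mul]
    calc ∑ x, v i * v x * P x j = (∑ x, P j x * v x) * v i := by
          rw [Finset.sum_mul]
          refine Finset.sum_congr rfl fun k _ => ?_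
          rw [← hPsymm.apply k j]
          ring
    _ = μ * (v i * v j) := by rw [hsum j]; ring
  have hvvt : (vecMulVec v v)ᵀ = vecMulVec v v := by
    ext i j; simp [vecMulVec_apply]; ring
  have ht : ((2 : ℝ) • vecMulVec v v - 1)ᵀ = (2 : ℝ) • vecMulVec v v - 1 := by
    rw [transpose_sub, transpose_smul, transpose_one, hvvt]
  rw [ht, mul_sub, sub_mul, mul_one, one_mul, mul_smul_comm, smul_mul_assoc, h1, h2]
  exact sub_self _

/-- For a symmetric positive definite `P` with three distinct eigenvalues and unit
eigenvectors `v₁, v₂, v₃`, the skew part `PR − RᵀP` vanishes for `R ∈ SO(3)` exactly when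
`R ∈ Θ = {I, exp(π v̂₁), exp(π v̂₂), exp(π v̂₃)}`; i.e. the configuration error function
`ψ(R) = ½ tr(P(I − R))` has exactly these 4 critical points. -/
theorem critical_points_of_configuration_error
    (P : Matrix (Fin 3) (Fin 3) ℝ) (hPsymm : P.IsSymm) (hPpos : P.PosDef)
    (μ₁ μ₂ μ₃ : ℝ) (hμ12 : μ₁ ≠ μ₂) (hμ13 : μ₁ ≠ μ₃) (hμ23 : μ₂ ≠ μ₃)
    (v₁ v₂ v₃ : Fin 3 → ℝ)
    (hv₁ : v₁ ⬝ᵥ v₁ = 1) (hv₂ : v₂ ⬝ᵥ v₂ = 1) (hv₃ : v₃ ⬝ᵥ v₃ = 1)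
    (hev₁ : P *ᵥ v₁ = μ₁ • v₁) (hev₂ : P *ᵥ v₂ = μ₂ • v₂) (hev₃ : P *ᵥ v₃ = μ₃ • v₃)
    (R : Matrix (Fin 3) (Fin 3) ℝ) (hR : R ∈ SO3) :
    P * R - Rᵀ * P = 0 ↔
      R ∈ ({1, NormedSpace.exp (Real.pi • hat v₁), NormedSpace.exp (Real.pi • hat v₂),
            NormedSpace.exp (Real.pi • hat v₃)} : Set (Matrix (Fin 3) (Fin 3) ℝ)) := by
  classical
  have hsym : ∀ x y : Fin 3 → ℝ, (P *ᵥ x) ⬝ᵥ y = x ⬝ᵥ (P *ᵥ y) := by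
    intro x y
    simp only [dotProduct, mulVec, dotProduct, Finset.sum_mul, Finset.mul_sum]
    rw [Finset.sum_comm]
    refine Finset.sum_congr rfl fun i _ => Finset.sum_congr rfl fun j _ => ?_
    rw [← hPsymm.apply i j]
    ring
  constructor
  · intro hcrit
    have hPR : P * R = Rᵀ * P := sub_eq_zero.mp hcrit
    set vs : Fin 3 → Fin 3 → ℝ := ![v₁, v₂, v₃] with hvs
    set μs : Fin 3 → ℝ := ![μ₁, μ₂, μ₃] with hμs
    have hveig : ∀ i, P *ᵥ vs i = μs i • vs i := by
      intro i
      fin_cases i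
      · simpa [hvs, hμs] using hev₁
      · simpa [hvs, hμs] using hev₂
      · simpa [hvs, hμs] using hev₃
    have hunit : ∀ i, vs i ⬝ᵥ vs i = 1 := by
      intro i
      fin_cases i
      · simpa [hvs] using hv₁
      · simpa [hvs] using hv₂
      · simpa [hvs] using hv₃
    have hμne : ∀ i j, i ≠ j → μs i ≠ μs j := by
      intro i j hij
      fin_cases i <;> fin_cases j <;> simp_all [hμs] <;>
        first
          | exact hμ12 | exact hμ13 | exact hμ23
          | exact Ne.symm hμ12 | exact Ne.symm hμ13 | exact Ne.symm hμ23
    have hμpos : ∀ i, 0 < μs i := by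
      intro i
      have hne0 : vs i ≠ 0 := by
        intro h
        have := hunit i
        rw [h] at this
        simp at this
      have hp := hPpos.dotProduct_mulVec_pos hne0
      have : star (vs i) ⬝ᵥ (P *ᵥ vs i) = μs i := by
        rw [hveig i]
        simp only [star_trivial]
        rw [dotProduct_smul, hunit i]
        simp
      rwa [this] at hp
    have horth : ∀ i j, vs i ⬝ᵥ vs j = if i = j then (1 : ℝ) else 0 := by
      intro i j
      by_cases h : i = j
      · subst h; simp [hunit i]
      · have h1 := hsym (vs i) (vs j)
        rw [hveig i, hveig j] at h1
        rw [smul_dotProduct, dotProduct_smul] at h1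
        have h2 : (μs i - μs j) * (vs i ⬝ᵥ vs j) = 0 := by
          simp only [smul_eq_mul] at h1
          linear_combination h1
        rcases mul_eq_zero.mp h2 with h3 | h3
        · exact absurd (sub_eq_zero.mp h3) (hμne i j h)
        · simp [h, h3]
    set Q : Matrix (Fin 3) (Fin 3) ℝ := Matrix.of fun i j => vs j i with hQ
    have hQtQ : Qᵀ * Q = 1 := by
      ext i j
      have h := horth i j
      simp only [dotProduct] at h
      simp only [Matrix.mul_apply, transpose_apply, hQ, Matrix.of_apply, Matrix.one_apply]
      exact h
    have hQQt : Q * Qᵀ = 1 := mul_eq_one_comm.mp hQtQ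
    have hdetQ : Q.det * Q.det = 1 := by
      have h := congrArg Matrix.det hQtQ
      rwa [det_mul, det_transpose, det_one] at h
    have hPQ : P * Q = Q * diagonal μs := by
      ext i j
      rw [Matrix.mul_diagonal, Matrix.mul_apply]
      have h := congrFun (hveig j) i
      simp only [mulVec, dotProduct, Pi.smul_apply, smul_eq_mul] at h
      simp only [hQ, Matrix.of_apply]
      rw [h]
      ring
    have hP : P = Q * diagonal μs * Qᵀ := by
      calc P = P * (Q * Qᵀ) := by rw [hQQt, mul_one]
      _ = (P * Q) * Qᵀ := by rw [mul_assoc]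
      _ = Q * diagonal μs * Qᵀ := by rw [hPQ]
    set S : Matrix (Fin 3) (Fin 3) ℝ := Qᵀ * R * Q with hS
    have hSt : Sᵀ = Qᵀ * Rᵀ * Q := by
      rw [hS, transpose_mul, transpose_mul, transpose_transpose, mul_assoc]
    have hRS : R = Q * S * Qᵀ := by
      have h : Q * (Qᵀ * R * Q) * Qᵀ = (Q * Qᵀ) * R * (Q * Qᵀ) := by noncomm_ring
      rw [hS, h, hQQt, one_mul, mul_one]
    have hSS : Sᵀ * S = 1 := by
      calc Sᵀ * S = Qᵀ * (Rᵀ * ((Q * Qᵀ) * (R * Q))) := by rw [hSt, hS]; noncomm_ring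
      _ = Qᵀ * ((Rᵀ * R) * Q) := by rw [hQQt, one_mul]; noncomm_ring
      _ = Qᵀ * Q := by rw [hR.1, one_mul]
      _ = 1 := hQtQ
    have hdetS : S.det = 1 := by
      have h : S.det = Q.det * Q.det * R.det := by
        rw [hS, det_mul, det_mul, det_transpose]
        ring
      rw [h, hdetQ, hR.2, one_mul]
    have hDS : diagonal μs * S = Sᵀ * diagonal μs := by
      calc diagonal μs * S = (Qᵀ * Q) * diagonal μs * S := by rw [hQtQ, one_mul]
      _ = Qᵀ * (Q * diagonal μs * Qᵀ * R) * Q := by rw [hS]; noncomm_ring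
      _ = Qᵀ * (P * R) * Q := by rw [← hP]
      _ = Qᵀ * (Rᵀ * P) * Q := by rw [hPR]
      _ = Qᵀ * (Rᵀ * (Q * diagonal μs * Qᵀ)) * Q := by rw [← hP]
      _ = (Qᵀ * Rᵀ * Q) * diagonal μs * (Qᵀ * Q) := by noncomm_ring
      _ = Sᵀ * diagonal μs := by rw [hQtQ, mul_one, hSt]
    have hoff := S_offdiag μs hμpos hμne S hSS hDS
    have hdiag : ∀ i, S i i * S i i = 1 := by
      intro i
      have h : (Sᵀ * S) i i = (1 : Matrix (Fin 3) (Fin 3) ℝ) i i := by rw [hSS]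
      rw [Matrix.mul_apply, Matrix.one_apply_eq] at h
      rw [Finset.sum_eq_single i
        (fun k _ hk => by rw [transpose_apply, hoff k i hk, mul_zero])
        (by simp)] at h
      rwa [transpose_apply] at h
    have hdet3 : S 0 0 * S 1 1 * S 2 2 = 1 := by
      have h := hdetS
      rw [det_fin_three] at h
      rw [hoff 0 1 (by decide), hoff 0 2 (by decide), hoff 1 0 (by decide),
        hoff 1 2 (by decide), hoff 2 0 (by decide), hoff 2 1 (by decide)] at h
      ring_nf at h ⊢
      linarith
    have hsign : ∀ i, S i i = 1 ∨ S i i = -1 := fun i => mul_self_eq_one_iff.mp (hdiag i)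
    have hcomp : ∀ i j, v₁ i * v₁ j + v₂ i * v₂ j + v₃ i * v₃ j
        = if i = j then (1 : ℝ) else 0 := by
      intro i j
      have h : (Q * Qᵀ) i j = (1 : Matrix (Fin 3) (Fin 3) ℝ) i j := by rw [hQQt]
      simpa [Matrix.mul_apply, Fin.sum_univ_three, hQ, hvs, Matrix.one_apply,
        transpose_apply] using h
    have hRentry : ∀ i j, R i j
        = S 0 0 * (v₁ i * v₁ j) + S 1 1 * (v₂ i * v₂ j) + S 2 2 * (v₃ i * v₃ j) := by
      intro i j
      have h : R i j = (Q * S * Qᵀ) i j := by rw [← hRS]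
      rw [h]
      simp only [Matrix.mul_apply, Fin.sum_univ_three, transpose_apply, hQ, Matrix.of_apply,
        hvs]
      rw [hoff 0 1 (by decide), hoff 0 2 (by decide), hoff 1 0 (by decide),
        hoff 1 2 (by decide), hoff 2 0 (by decide), hoff 2 1 (by decide)]
      simp [Matrix.cons_val_zero, Matrix.cons_val_one]
      ring
    simp only [Set.mem_insert_iff, Set.mem_singleton_iff]
    rcases hsign 0 with h0 | h0 <;> rcases hsign 1 with h1 | h1 <;>
      rcases hsign 2 with h2 | h2
    · -- (1,1,1) : R = 1
      left
      ext i j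
      rw [hRentry i j, h0, h1, h2, Matrix.one_apply]
      have hc := hcomp i j
      split_ifs at hc ⊢ <;> linarith
    · -- (1,1,-1) impossible
      exfalso; rw [h0, h1, h2] at hdet3; norm_num at hdet3
    · -- (1,-1,1) impossible
      exfalso; rw [h0, h1, h2] at hdet3; norm_num at hdet3
    · -- (1,-1,-1) : R = exp about v₁
      right; left
      rw [rodrigues v₁ hv₁]
      ext i j
      rw [hRentry i j, h0, h1, h2]
      simp only [Matrix.sub_apply, Matrix.smul_apply, vecMulVec_apply, Matrix.one_apply,
        smul_eq_mul]
      have hc := hcomp i j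
      split_ifs at hc ⊢ <;> linarith
    · -- (-1,1,1) impossible
      exfalso; rw [h0, h1, h2] at hdet3; norm_num at hdet3
    · -- (-1,1,-1) : R = exp about v₂
      right; right; left
      rw [rodrigues v₂ hv₂]
      ext i j
      rw [hRentry i j, h0, h1, h2]
      simp only [Matrix.sub_apply, Matrix.smul_apply, vecMulVec_apply, Matrix.one_apply,
        smul_eq_mul]
      have hc := hcomp i j
      split_ifs at hc ⊢ <;> linarith
    · -- (-1,-1,1) : R = exp about v₃
      right; right; right
      rw [rodrigues v₃ hv₃]
      ext i j
      rw [hRentry i j, h0, h1, h2]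
      simp only [Matrix.sub_apply, Matrix.smul_apply, vecMulVec_apply, Matrix.one_apply,
        smul_eq_mul]
      have hc := hcomp i j
      split_ifs at hc ⊢ <;> linarith
    · -- (-1,-1,-1) impossible
      exfalso; rw [h0, h1, h2] at hdet3; norm_num at hdet3
  · intro hmem
    simp only [Set.mem_insert_iff, Set.mem_singleton_iff] at hmem
    rcases hmem with rfl | rfl | rfl | rfl
    · simp [transpose_one]
    · rw [rodrigues v₁ hv₁]
      exact comm_aux P hPsymm μ₁ v₁ hev₁
    · rw [rodrigues v₂ hv₂]
      exact comm_aux P hPsymm μ₂ v₂ hev₂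
    · rw [rodrigues v₃ hv₃]
      exact comm_aux P hPsymm μ₃ v₃ hev₃
end

section
/- Let P be a real symmetric positive definite 3×3 matrix. Then for every R ∈ SO(3), ψ(R) = ½ tr(P(I − R)) ≥ 0, and ψ(R) = 0 if and only if R = I. -/
open Matrix

/-- The configuration error function `ψ(R) = ½ tr(P(I − R))`. -/
noncomputable def ψ (P R : Matrix (Fin 3) (Fin 3) ℝ) : ℝ :=
  (1 / 2 : ℝ) * (P * (1 - R)).trace

lemma diag_form (P M : Matrix (Fin 3) (Fin 3) ℝ) (i : Fin 3) :
    (Mᵀ * P * M) i i = (fun j => M j i) ⬝ᵥ P *ᵥ (fun j => M j i) := by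
  simp only [mul_apply, dotProduct, mulVec, transpose_apply, Finset.sum_mul, Finset.mul_sum]
  rw [Finset.sum_comm]
  exact Finset.sum_congr rfl fun k _ => Finset.sum_congr rfl fun j _ => by ring

lemma trace_id (P R : Matrix (Fin 3) (Fin 3) ℝ) (hPsymm : P.IsSymm)
    (hR : Rᵀ * R = 1) :
    ((1 - R)ᵀ * P * (1 - R)).trace = 2 * (P * (1 - R)).trace := by
  have hRR : R * Rᵀ = 1 := mul_eq_one_comm.mp hR
  have hRtP : (Rᵀ * P).trace = (P * R).trace := by
    rw [← trace_transpose (Rᵀ * P), transpose_mul, transpose_transpose, hPsymm.eq, trace_mul_comm]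
  have hRPR : (Rᵀ * (P * R)).trace = P.trace := by
    rw [trace_mul_comm, mul_assoc, hRR, mul_one]
  have e : (1 - R)ᵀ * P * (1 - R) = P - P * R - Rᵀ * P + Rᵀ * (P * R) := by
    simp only [transpose_sub, transpose_one, sub_mul, mul_sub, one_mul, mul_one, mul_assoc]
    abel
  rw [e, trace_add, trace_sub, trace_sub, hRtP, hRPR, mul_sub, mul_one, trace_sub]
  ring

/-- For symmetric positive definite `P`, the configuration error function is nonnegative on
`SO(3)` and vanishes exactly at the identity. -/
theorem configuration_error_nonneg_and_eq_zero_iff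
    (P : Matrix (Fin 3) (Fin 3) ℝ) (hPsymm : P.IsSymm) (hPpos : P.PosDef)
    (R : Matrix (Fin 3) (Fin 3) ℝ) (hR : R ∈ SO3) :
    0 ≤ ψ P R ∧ (ψ P R = 0 ↔ R = 1) := by
  obtain ⟨hRo, -⟩ := hR
  set M := 1 - R with hM
  have key : ψ P R = (1 / 4 : ℝ) * (Mᵀ * P * M).trace := by
    rw [ψ, hM, trace_id P R hPsymm hRo]; ring
  have hdiag : ∀ i, 0 ≤ (Mᵀ * P * M) i i := by
    intro i
    rw [diag_form]
    simpa using hPpos.posSemidef.dotProduct_mulVec_nonneg (fun j => M j i)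
  have htr : 0 ≤ (Mᵀ * P * M).trace := Finset.sum_nonneg fun i _ => hdiag i
  constructor
  · rw [key]; linarith
  constructor
  · intro h
    rw [key] at h
    have htr0 : (Mᵀ * P * M).trace = 0 := by linarith
    have hcol : ∀ i j, M j i = 0 := by
      intro i j
      have hzero : (Mᵀ * P * M) i i = 0 := by
        by_contra hne
        have hpos : 0 < (Mᵀ * P * M) i i := lt_of_le_of_ne (hdiag i) (Ne.symm hne)
        have : 0 < (Mᵀ * P * M).trace := by
          rw [trace]
          exact lt_of_lt_of_le hpos (Finset.single_le_sum (f := (Mᵀ * P * M).diag)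
            (fun k _ => hdiag k) (Finset.mem_univ i))
        linarith
      by_contra hMji
      have hv : (fun j => M j i) ≠ 0 := by
        intro hv0
        exact hMji (congrFun hv0 j)
      have := hPpos.dotProduct_mulVec_pos hv
      rw [diag_form] at hzero
      simp only [star_trivial] at this
      rw [hzero] at this
      exact lt_irrefl 0 this
    have hM0 : M = 0 := by
      ext a b
      exact hcol b a
    have : (1 : Matrix (Fin 3) (Fin 3) ℝ) - R = 0 := hM ▸ hM0
    exact (sub_eq_zero.mp this).symm
  · intro h
    rw [h, ψ]
    simp
end

section
/- (Lyapunov decrease for the rigid-body attitude tracking controller.) Let P ∈ ℝ^{3×3} be symmetric, J ∈ ℝ^{3×3} be symmetric, and k_R, k_ω > 0. Let R_e : ℝ → SO(3) and e_ω : ℝ → ℝ³ be differentiable and satisfy the closed-loop rigid-body error dynamics Ṙ_e(t) = R_e(t) ê_ω(t) and J ė_ω(t) = −k_R e_R(R_e(t)) − k_ω e_ω(t), where e_R(R) = vee(½(PR − RᵀP)). Then the function V₁(t) = k_R ψ(R_e(t)) + ½ e_ω(t)ᵀ J e_ω(t), with ψ(R) = ½ tr(P(I − R)), satisfies dV₁/dt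 = −k_ω ‖e_ω(t)‖² for all t. -/
open Matrix

attribute [local instance] Matrix.normedAddCommGroup Matrix.normedSpace

/-- The vee map, inverse of the hat map on skew-symmetric matrices. -/
def vee (A : Matrix (Fin 3) (Fin 3) ℝ) : Fin 3 → ℝ :=
  ![A 2 1, A 0 2, A 1 0]

/-- The attitude error vector `e_R(R) = vee(½(PR − RᵀP))`. -/
noncomputable def eR (P R : Matrix (Fin 3) (Fin 3) ℝ) : Fin 3 → ℝ :=
  vee ((1 / 2 : ℝ) • (P * R - Rᵀ * P))

private lemma hasDerivAt_dot {n : ℕ} (f g : ℝ → (Fin n → ℝ)) (f' g' : Fin n → ℝ) (t : ℝ)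
    (hf : ∀ i, HasDerivAt (fun s => f s i) (f' i) t)
    (hg : ∀ i, HasDerivAt (fun s => g s i) (g' i) t) :
    HasDerivAt (fun s => f s ⬝ᵥ g s) (f' ⬝ᵥ g t + f t ⬝ᵥ g') t := by
  have h : HasDerivAt (fun s => ∑ i, f s i * g s i)
      (∑ i, (f' i * g t i + f t i * g' i)) t :=
    HasDerivAt.fun_sum (fun i _ => (hf i).mul (hg i))
  simpa [dotProduct, Finset.sum_add_distrib] using h

private lemma key_trace (P R : Matrix (Fin 3) (Fin 3) ℝ) (hP : P.IsSymm) (w : Fin 3 → ℝ) :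
    -((1 / 2 : ℝ) * (P * (R * hat w)).trace) = eR P R ⬝ᵥ w := by
  have h01 : P 1 0 = P 0 1 := hP.apply 0 1
  have h02 : P 2 0 = P 0 2 := hP.apply 0 2
  have h12 : P 2 1 = P 1 2 := hP.apply 1 2
  have e00 : hat w 0 0 = 0 := rfl
  have e01 : hat w 0 1 = -w 2 := rfl
  have e02 : hat w 0 2 = w 1 := rfl
  have e10 : hat w 1 0 = w 2 := rfl
  have e11 : hat w 1 1 = 0 := rfl
  have e12 : hat w 1 2 = -w 0 := rfl
  have e20 : hat w 2 0 = -w 1 := rfl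
  have e21 : hat w 2 1 = w 0 := rfl
  have e22 : hat w 2 2 = 0 := rfl
  simp only [eR, vee, Matrix.trace_fin_three, Matrix.mul_apply, Fin.sum_univ_three,
    dotProduct, Matrix.smul_apply, Matrix.sub_apply, Matrix.transpose_apply,
    Matrix.cons_val_zero, Matrix.cons_val_one, Matrix.head_cons, Matrix.cons_val_two,
    Matrix.tail_cons, Fin.isValue, smul_eq_mul,
    e00, e01, e02, e10, e11, e12, e20, e21, e22]
  rw [h01, h02, h12]
  ring

/-- Lyapunov decrease for the rigid-body attitude tracking controller: along the closed-loop
error dynamics `Ṙ_e = R_e ê_ω`, `J ė_ω = −k_R e_R(R_e) − k_ω e_ω`, the Lyapunov function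
`V₁ = k_R ψ(R_e) + ½ e_ωᵀ J e_ω` satisfies `V̇₁ = −k_ω ‖e_ω‖²`. -/
theorem lyapunov_decrease_rigid_body
    (P J : Matrix (Fin 3) (Fin 3) ℝ) (hPsymm : P.IsSymm) (hJsymm : J.IsSymm)
    (kR kω : ℝ) (hkR : 0 < kR) (hkω : 0 < kω)
    (Re : ℝ → Matrix (Fin 3) (Fin 3) ℝ) (eω eω' : ℝ → Fin 3 → ℝ)
    (hReSO3 : ∀ t, Re t ∈ SO3)
    (hRe : ∀ t, HasDerivAt Re (Re t * hat (eω t)) t)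
    (heω : ∀ t, HasDerivAt eω (eω' t) t)
    (hdyn : ∀ t, J *ᵥ eω' t = -(kR • eR P (Re t)) - kω • eω t) :
    ∀ t, HasDerivAt (fun s => kR * ψ P (Re s) + (1 / 2 : ℝ) * (eω s ⬝ᵥ (J *ᵥ eω s)))
      (-(kω * (eω t ⬝ᵥ eω t))) t := by
  intro t
  -- trace ∘ (P * ·) is a continuous linear map
  set L : Matrix (Fin 3) (Fin 3) ℝ →L[ℝ] ℝ :=
    LinearMap.toContinuousLinearMap
      ((Matrix.traceLinearMap (Fin 3) ℝ ℝ).comp (LinearMap.mulLeft ℝ P)) with hL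
  have hLapp : ∀ M, L M = (P * M).trace := by
    intro M; simp [hL]
  have hT : HasDerivAt (fun s => (P * Re s).trace)
      ((P * (Re t * hat (eω t))).trace) t := by
    have := L.hasFDerivAt.comp_hasDerivAt t (hRe t)
    rw [show (⇑L ∘ Re) = fun s => (P * Re s).trace from funext fun s => hLapp _] at this
    exact this.congr_deriv (hLapp _)
  have hψ : HasDerivAt (fun s => kR * ψ P (Re s))
      (kR * (-((1 / 2 : ℝ) * (P * (Re t * hat (eω t))).trace))) t := by
    have h1 : HasDerivAt (fun s => (1 / 2 : ℝ) * P.trace - (1 / 2 : ℝ) * (P * Re s).trace)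
        (-((1 / 2 : ℝ) * (P * (Re t * hat (eω t))).trace)) t :=
      (hT.const_mul (1 / 2 : ℝ)).const_sub _
    have heq : ∀ s, kR * ψ P (Re s) =
        kR * ((1 / 2 : ℝ) * P.trace - (1 / 2 : ℝ) * (P * Re s).trace) := by
      intro s
      simp only [ψ, Matrix.mul_sub, Matrix.mul_one, Matrix.trace_sub]
      ring
    simpa only [← heq] using h1.const_mul kR
  -- components of eω
  have hcomp : ∀ i, HasDerivAt (fun s => eω s i) (eω' t i) t := by
    intro i
    exact (ContinuousLinearMap.proj i : (Fin 3 → ℝ) →L[ℝ] ℝ).hasFDerivAt.comp_hasDerivAt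
      t (heω t)
  have hgi : ∀ i, HasDerivAt (fun s => (J *ᵥ eω s) i) ((J *ᵥ eω' t) i) t := by
    intro i
    simp only [Matrix.mulVec, dotProduct]
    exact HasDerivAt.fun_sum (fun j _ => (hcomp j).const_mul (J i j))
  have hdot : HasDerivAt (fun s => eω s ⬝ᵥ (J *ᵥ eω s))
      (eω' t ⬝ᵥ (J *ᵥ eω t) + eω t ⬝ᵥ (J *ᵥ eω' t)) t :=
    hasDerivAt_dot eω (fun s => J *ᵥ eω s) (eω' t) (J *ᵥ eω' t) t hcomp hgi
  have hsum := hψ.add (hdot.const_mul (1 / 2 : ℝ))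
  convert hsum using 1
  case e'_4 => rfl
  case e'_5 => rfl
  case e'_8 => rfl
  have hsymmswap : eω' t ⬝ᵥ (J *ᵥ eω t) = eω t ⬝ᵥ (J *ᵥ eω' t) := by
    have hJ01 : J 1 0 = J 0 1 := hJsymm.apply 0 1
    have hJ02 : J 2 0 = J 0 2 := hJsymm.apply 0 2
    have hJ12 : J 2 1 = J 1 2 := hJsymm.apply 1 2
    simp only [dotProduct, Matrix.mulVec, Fin.sum_univ_three]
    rw [hJ01, hJ02, hJ12]
    ring
  rw [key_trace P (Re t) hPsymm (eω t), hsymmswap, hdyn t]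
  simp only [dotProduct_sub, dotProduct_neg, dotProduct_smul,
    smul_eq_mul, dotProduct_comm (eR P (Re t)) (eω t)]
  ring
end

section
/- Let P ∈ ℝ^{3×3} be symmetric, let J = diag(J₁,J₂,J₃) with J₁,J₂,J₃ > 0, let k_R, k_ω > 0, and let D = diag(2ζ₁Ω₁, 2ζ₂Ω₂, 2ζ₃Ω₃), K = diag(Ω₁², Ω₂², Ω₃²) with ζᵢ, Ωᵢ > 0. Let R_e : ℝ → SO(3), e_ω : ℝ → ℝ³ be differentiable and M_e : ℝ → ℝ³ be twice differentiable, satisfying the error dynamics Ṙ_e = R_e ê_ω, J ė_ω = −k_R e_R(R_e) − k_ω e_ω + M_e, and M̈_e + D Ṁ_e + K M_e = 0. Then the Lyapunov function V(t) = k_R ψ(R_e(t)) + ½ e_ω(t)ᵀ J e_ω(t) + ½ M_e(t)ᵀ K M_e(t) + ½ ‖Ṁ_e(t)‖² satisfies dV/dt = −e_ω(t)ᵀ( k_ω e_ω(t) − M_e(t) ) − Ṁ_e(t)ᵀ D Ṁ_e(t) for all t. -/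
open Matrix

attribute [local instance] Matrix.normedAddCommGroup Matrix.normedSpace

section Aux

open Matrix

private lemma hasDerivAt_dot3 {f g : ℝ → Fin 3 → ℝ} {f' g' : Fin 3 → ℝ} {t : ℝ}
    (hf : ∀ i, HasDerivAt (fun s => f s i) (f' i) t)
    (hg : ∀ i, HasDerivAt (fun s => g s i) (g' i) t) :
    HasDerivAt (fun s => f s ⬝ᵥ g s) (f' ⬝ᵥ g t + f t ⬝ᵥ g') t := by
  simp only [dotProduct, Fin.sum_univ_three]
  have h := (((hf 0).mul (hg 0)).add ((hf 1).mul (hg 1))).add ((hf 2).mul (hg 2))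
  refine h.congr_deriv ?_
  ring

private lemma hasDerivAt_mulVec3 {A : Matrix (Fin 3) (Fin 3) ℝ} {f : ℝ → Fin 3 → ℝ}
    {f' : Fin 3 → ℝ} {t : ℝ}
    (hf : ∀ i, HasDerivAt (fun s => f s i) (f' i) t) (i : Fin 3) :
    HasDerivAt (fun s => (A *ᵥ f s) i) ((A *ᵥ f') i) t := by
  simp only [mulVec, dotProduct, Fin.sum_univ_three]
  exact (((hf 0).const_mul (A i 0)).add ((hf 1).const_mul (A i 1))).add
    ((hf 2).const_mul (A i 2))

end Aux

/-- Lyapunov derivative identity for the full error dynamics: along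
`Ṙ_e = R_e ê_ω`, `J ė_ω = −k_R e_R(R_e) − k_ω e_ω + M_e`, `M̈_e + D Ṁ_e + K M_e = 0`,
the Lyapunov function `V = k_R ψ(R_e) + ½ e_ωᵀ J e_ω + ½ M_eᵀ K M_e + ½ ‖Ṁ_e‖²`
satisfies `V̇ = −e_ωᵀ(k_ω e_ω − M_e) − Ṁ_eᵀ D Ṁ_e`. -/
theorem lyapunov_derivative_full_error_dynamics
    (P : Matrix (Fin 3) (Fin 3) ℝ) (hPsymm : P.IsSymm)
    (J₁ J₂ J₃ : ℝ) (hJ₁ : 0 < J₁) (hJ₂ : 0 < J₂) (hJ₃ : 0 < J₃)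
    (kR kω : ℝ) (hkR : 0 < kR) (hkω : 0 < kω)
    (ζ₁ ζ₂ ζ₃ Ω₁ Ω₂ Ω₃ : ℝ)
    (hζ₁ : 0 < ζ₁) (hζ₂ : 0 < ζ₂) (hζ₃ : 0 < ζ₃)
    (hΩ₁ : 0 < Ω₁) (hΩ₂ : 0 < Ω₂) (hΩ₃ : 0 < Ω₃)
    (J D K : Matrix (Fin 3) (Fin 3) ℝ)
    (hJ : J = Matrix.diagonal ![J₁, J₂, J₃])
    (hD : D = Matrix.diagonal ![2 * ζ₁ * Ω₁, 2 * ζ₂ * Ω₂, 2 * ζ₃ * Ω₃])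
    (hK : K = Matrix.diagonal ![Ω₁ ^ 2, Ω₂ ^ 2, Ω₃ ^ 2])
    (Re : ℝ → Matrix (Fin 3) (Fin 3) ℝ) (eω eω' Me Me' Me'' : ℝ → Fin 3 → ℝ)
    (hReSO3 : ∀ t, Re t ∈ SO3)
    (hRe : ∀ t, HasDerivAt Re (Re t * hat (eω t)) t)
    (heω : ∀ t, HasDerivAt eω (eω' t) t)
    (hMe : ∀ t, HasDerivAt Me (Me' t) t)
    (hMe' : ∀ t, HasDerivAt Me' (Me'' t) t)
    (hdyn : ∀ t, J *ᵥ eω' t = -(kR • eR P (Re t)) - kω • eω t + Me t)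
    (hMdyn : ∀ t, Me'' t + D *ᵥ Me' t + K *ᵥ Me t = 0) :
    ∀ t, HasDerivAt
      (fun s => kR * ψ P (Re s) + (1 / 2 : ℝ) * (eω s ⬝ᵥ (J *ᵥ eω s))
        + (1 / 2 : ℝ) * (Me s ⬝ᵥ (K *ᵥ Me s)) + (1 / 2 : ℝ) * (Me' s ⬝ᵥ Me' s))
      (-(eω t ⬝ᵥ (kω • eω t - Me t)) - Me' t ⬝ᵥ (D *ᵥ Me' t)) t := by
  intro t
  -- component derivatives
  have hRc : ∀ i j, HasDerivAt (fun s => Re s i j) ((Re t * hat (eω t)) i j) t := by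
    intro i j
    exact hasDerivAt_pi.mp (hasDerivAt_pi.mp (hRe t) i) j
  have heωc : ∀ i, HasDerivAt (fun s => eω s i) (eω' t i) t :=
    fun i => hasDerivAt_pi.mp (heω t) i
  have hMec : ∀ i, HasDerivAt (fun s => Me s i) (Me' t i) t :=
    fun i => hasDerivAt_pi.mp (hMe t) i
  have hMec' : ∀ i, HasDerivAt (fun s => Me' s i) (Me'' t i) t :=
    fun i => hasDerivAt_pi.mp (hMe' t) i
  -- ψ term
  have htr : HasDerivAt (fun s => (P * Re s).trace)
      (∑ i, ∑ j, P i j * (Re t * hat (eω t)) j i) t := by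
    simp only [Matrix.trace, Matrix.diag, Matrix.mul_apply]
    apply HasDerivAt.fun_sum
    intro i _
    apply HasDerivAt.fun_sum
    intro j _
    exact (hRc j i).const_mul (P i j)
  have hψ : HasDerivAt (fun s => kR * ψ P (Re s))
      (kR * ((1/2 : ℝ) * (0 - ∑ i, ∑ j, P i j * (Re t * hat (eω t)) j i))) t := by
    have h0 : ∀ s, kR * ψ P (Re s)
        = kR * ((1/2 : ℝ) * (P.trace - (P * Re s).trace)) := by
      intro s
      simp [ψ, Matrix.mul_sub, Matrix.mul_one]
    simp only [h0]
    exact (((hasDerivAt_const t P.trace).sub htr).const_mul (1/2 : ℝ)).const_mul kR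
  have h2 := (hasDerivAt_dot3 heωc (hasDerivAt_mulVec3 (A := J) heωc)).const_mul (1/2 : ℝ)
  have h3 := (hasDerivAt_dot3 hMec (hasDerivAt_mulVec3 (A := K) hMec)).const_mul (1/2 : ℝ)
  have h4 := (hasDerivAt_dot3 hMec' hMec').const_mul (1/2 : ℝ)
  have hbig := ((hψ.add h2).add h3).add h4
  refine hbig.congr_deriv ?_
  symm
  -- now prove the value equality
  have hd := hdyn t
  have hm : Me'' t = -(D *ᵥ Me' t) - K *ᵥ Me t := by
    have := hMdyn t
    funext i
    have := congrFun this i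
    simp only [Pi.add_apply, Pi.zero_apply, Pi.sub_apply, Pi.neg_apply] at this ⊢
    linarith
  have hd0 := congrFun hd 0
  have hd1 := congrFun hd 1
  have hd2 := congrFun hd 2
  have hm0 := congrFun hm 0
  have hm1 := congrFun hm 1
  have hm2 := congrFun hm 2
  have hP01 : P 0 1 = P 1 0 := by
    have := congrFun (congrFun hPsymm 1) 0; simpa [Matrix.transpose_apply] using this
  have hP02 : P 0 2 = P 2 0 := by
    have := congrFun (congrFun hPsymm 2) 0; simpa [Matrix.transpose_apply] using this
  have hP12 : P 1 2 = P 2 1 := by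
    have := congrFun (congrFun hPsymm 2) 1; simpa [Matrix.transpose_apply] using this
  subst hJ hD hK
  simp only [eR, vee, hat, Matrix.mul_apply, Matrix.mulVec_diagonal, dotProduct,
    Matrix.smul_apply, Matrix.sub_apply, Matrix.transpose_apply,
    Fin.sum_univ_three, Pi.smul_apply, Pi.sub_apply, Pi.add_apply, Pi.neg_apply,
    smul_eq_mul, Matrix.cons_val', Matrix.cons_val_zero, Matrix.cons_val_one,
    Matrix.head_cons, Matrix.head_fin_const, Matrix.cons_val_fin_one, Matrix.empty_val',
    Matrix.cons_val_two, Matrix.tail_cons, Matrix.of_apply] at hd0 hd1 hd2 hm0 hm1 hm2 ⊢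
  linear_combination (-(eω t 0)) * hd0 - (eω t 1) * hd1 - (eω t 2) * hd2
    - (Me' t 0) * hm0 - (Me' t 1) * hm1 - (Me' t 2) * hm2
    + (kR * (Re t 1 1 * eω t 2 - Re t 0 2 * eω t 0) / 2) * hP01
    + (kR * (Re t 2 1 * eω t 2 - Re t 0 0 * eω t 1) / 2) * hP02
    + (kR * (Re t 2 2 * eω t 0 - Re t 1 0 * eω t 1) / 2) * hP12
end

section
/- Under the hypotheses of the Lyapunov derivative identity for the full error dynamics (P symmetric, J = diag(J₁,J₂,J₃) with positive entries, k_R, k_ω > 0, D = diag(2ζᵢΩᵢ), K = diag(Ωᵢ²) with ζᵢ, Ωᵢ > 0, and (R_e, e_ω, M_e) a solution of Ṙ_e = R_e ê_ω, J ė_ω = −k_R e_R(R_e) − k_ω e_ω + M_e, M̈_e + D Ṁ_e + K M_e = 0), suppose in addition that there are constants M₀ ≥ 0 and λ > 0 with ‖M_e(t)‖ ≤ M₀ e^{−λ t} for all t ≥ 0. Then the Lyapunov function V(t) = k_R ψ(R_e(t)) + ½ e_ω(t)ᵀ J e_ω(t) + ½ M_e(t)ᵀ K M_e(t) + ½ ‖Ṁ_e(t)‖²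 satisfies, for all t ≥ 0, dV/dt ≤ −‖e_ω(t)‖ ( k_ω ‖e_ω(t)‖ − M₀ e^{−λ t} ) − Ṁ_e(t)ᵀ D Ṁ_e(t). -/
open Matrix

attribute [local instance] Matrix.normedAddCommGroup Matrix.normedSpace

/-- The Euclidean norm on `ℝ³`. -/
noncomputable def enorm (v : Fin 3 → ℝ) : ℝ := Real.sqrt (v ⬝ᵥ v)

lemma dot_self_nonneg' (v : Fin 3 → ℝ) : 0 ≤ v ⬝ᵥ v :=
  Finset.sum_nonneg fun i _ => mul_self_nonneg _

lemma dot_le_enorm_mul (v w : Fin 3 → ℝ) : v ⬝ᵥ w ≤ _root_.enorm v * _root_.enorm w := by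
  have h2 : (v ⬝ᵥ w) ^ 2 ≤ (v ⬝ᵥ v) * (w ⬝ᵥ w) := by
    have := Finset.sum_mul_sq_le_sq_mul_sq Finset.univ v w
    simpa [dotProduct, pow_two, Finset.mul_sum, Finset.sum_mul, mul_comm, mul_left_comm] using this
  calc v ⬝ᵥ w ≤ |v ⬝ᵥ w| := le_abs_self _
    _ = Real.sqrt ((v ⬝ᵥ w) ^ 2) := (Real.sqrt_sq_eq_abs _).symm
    _ ≤ Real.sqrt ((v ⬝ᵥ v) * (w ⬝ᵥ w)) := Real.sqrt_le_sqrt h2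
    _ = _root_.enorm v * _root_.enorm w := Real.sqrt_mul (dot_self_nonneg' v) _

lemma enorm_mul_self (v : Fin 3 → ℝ) : _root_.enorm v * _root_.enorm v = v ⬝ᵥ v :=
  Real.mul_self_sqrt (dot_self_nonneg' v)


set_option maxHeartbeats 2000000 in
/-- Lyapunov derivative bound for the full error dynamics: under the error dynamics
`Ṙ_e = R_e ê_ω`, `J ė_ω = −k_R e_R(R_e) − k_ω e_ω + M_e`, `M̈_e + D Ṁ_e + K M_e = 0`,
and the exponential bound `‖M_e(t)‖ ≤ M₀ e^{−λt}` for `t ≥ 0`, the Lyapunov function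
`V = k_R ψ(R_e) + ½ e_ωᵀ J e_ω + ½ M_eᵀ K M_e + ½ ‖Ṁ_e‖²` satisfies
`V̇ ≤ −‖e_ω‖(k_ω ‖e_ω‖ − M₀ e^{−λt}) − Ṁ_eᵀ D Ṁ_e` for all `t ≥ 0`. -/
theorem lyapunov_derivative_bound_full_error_dynamics
    (P : Matrix (Fin 3) (Fin 3) ℝ) (hPsymm : P.IsSymm)
    (J₁ J₂ J₃ : ℝ) (hJ₁ : 0 < J₁) (hJ₂ : 0 < J₂) (hJ₃ : 0 < J₃)
    (kR kω : ℝ) (hkR : 0 < kR) (hkω : 0 < kω)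
    (ζ₁ ζ₂ ζ₃ Ω₁ Ω₂ Ω₃ : ℝ)
    (hζ₁ : 0 < ζ₁) (hζ₂ : 0 < ζ₂) (hζ₃ : 0 < ζ₃)
    (hΩ₁ : 0 < Ω₁) (hΩ₂ : 0 < Ω₂) (hΩ₃ : 0 < Ω₃)
    (J D K : Matrix (Fin 3) (Fin 3) ℝ)
    (hJ : J = Matrix.diagonal ![J₁, J₂, J₃])
    (hD : D = Matrix.diagonal ![2 * ζ₁ * Ω₁, 2 * ζ₂ * Ω₂, 2 * ζ₃ * Ω₃])
    (hK : K = Matrix.diagonal ![Ω₁ ^ 2, Ω₂ ^ 2, Ω₃ ^ 2])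
    (Re : ℝ → Matrix (Fin 3) (Fin 3) ℝ) (eω eω' Me Me' Me'' : ℝ → Fin 3 → ℝ)
    (hReSO3 : ∀ t, Re t ∈ SO3)
    (hRe : ∀ t, HasDerivAt Re (Re t * hat (eω t)) t)
    (heω : ∀ t, HasDerivAt eω (eω' t) t)
    (hMe : ∀ t, HasDerivAt Me (Me' t) t)
    (hMe' : ∀ t, HasDerivAt Me' (Me'' t) t)
    (hdyn : ∀ t, J *ᵥ eω' t = -(kR • eR P (Re t)) - kω • eω t + Me t)
    (hMdyn : ∀ t, Me'' t + D *ᵥ Me' t + K *ᵥ Me t = 0)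
    (M₀ lam : ℝ) (hM₀ : 0 ≤ M₀) (hlam : 0 < lam)
    (hMebound : ∀ t : ℝ, 0 ≤ t → _root_.enorm (Me t) ≤ M₀ * Real.exp (-lam * t)) :
    ∀ t : ℝ, 0 ≤ t → ∀ d : ℝ,
      HasDerivAt
        (fun s => kR * ψ P (Re s) + (1 / 2 : ℝ) * (eω s ⬝ᵥ (J *ᵥ eω s))
          + (1 / 2 : ℝ) * (Me s ⬝ᵥ (K *ᵥ Me s)) + (1 / 2 : ℝ) * (Me' s ⬝ᵥ Me' s)) d t →
      d ≤ -(_root_.enorm (eω t) * (kω * _root_.enorm (eω t) - M₀ * Real.exp (-lam * t)))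
            - Me' t ⬝ᵥ (D *ᵥ Me' t) := by
  intro t ht d hd
  have hωi := hasDerivAt_pi.mp (heω t)
  have hMi := hasDerivAt_pi.mp (hMe t)
  have hMi' := hasDerivAt_pi.mp (hMe' t)
  have hRij : ∀ i j : Fin 3, HasDerivAt (fun s => Re s i j) ((Re t * hat (eω t)) i j) t :=
    fun i j => hasDerivAt_pi.mp (hasDerivAt_pi.mp (hRe t) i) j
  have htr := (((((((((hRij 0 0).const_mul (P 0 0)).add ((hRij 1 0).const_mul (P 0 1))).add
    ((hRij 2 0).const_mul (P 0 2))).add ((hRij 0 1).const_mul (P 1 0))).add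
    ((hRij 1 1).const_mul (P 1 1))).add ((hRij 2 1).const_mul (P 1 2))).add
    ((hRij 0 2).const_mul (P 2 0))).add ((hRij 1 2).const_mul (P 2 1))).add
    ((hRij 2 2).const_mul (P 2 2))
  have hA := ((((hasDerivAt_const t P.trace).sub htr).const_mul (1/2 : ℝ)).const_mul kR)
  have hB := (((((hωi 0).mul (hωi 0)).const_mul J₁).add
    (((hωi 1).mul (hωi 1)).const_mul J₂)).add
    (((hωi 2).mul (hωi 2)).const_mul J₃)).const_mul (1/2 : ℝ)
  have hC := (((((hMi 0).mul (hMi 0)).const_mul (Ω₁ ^ 2)).add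
    (((hMi 1).mul (hMi 1)).const_mul (Ω₂ ^ 2))).add
    (((hMi 2).mul (hMi 2)).const_mul (Ω₃ ^ 2))).const_mul (1/2 : ℝ)
  have hDm := ((((hMi' 0).mul (hMi' 0)).add ((hMi' 1).mul (hMi' 1))).add
    ((hMi' 2).mul (hMi' 2))).const_mul (1/2 : ℝ)
  have hE := ((hA.add hB).add hC).add hDm
  have hfun : (fun s => kR * ψ P (Re s) + (1 / 2 : ℝ) * (eω s ⬝ᵥ (J *ᵥ eω s))
      + (1 / 2 : ℝ) * (Me s ⬝ᵥ (K *ᵥ Me s)) + (1 / 2 : ℝ) * (Me' s ⬝ᵥ Me' s))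
      = (fun s => kR * (1 / 2 * ((fun _ : ℝ => P.trace) s -
        (P 0 0 * Re s 0 0 + P 0 1 * Re s 1 0 + P 0 2 * Re s 2 0
        + P 1 0 * Re s 0 1 + P 1 1 * Re s 1 1 + P 1 2 * Re s 2 1
        + P 2 0 * Re s 0 2 + P 2 1 * Re s 1 2 + P 2 2 * Re s 2 2)))
        + 1 / 2 * (J₁ * (eω s 0 * eω s 0) + J₂ * (eω s 1 * eω s 1) + J₃ * (eω s 2 * eω s 2))
        + 1 / 2 * (Ω₁ ^ 2 * (Me s 0 * Me s 0) + Ω₂ ^ 2 * (Me s 1 * Me s 1)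
            + Ω₃ ^ 2 * (Me s 2 * Me s 2))
        + 1 / 2 * (Me' s 0 * Me' s 0 + Me' s 1 * Me' s 1 + Me' s 2 * Me' s 2)) := by
    funext s
    simp [ψ, Matrix.trace, Matrix.diag, Matrix.mul_apply, Matrix.sub_apply,
      Matrix.one_apply, Fin.sum_univ_three, hJ, hK, Matrix.mulVec_diagonal, dotProduct]
    ring
  rw [hfun] at hd
  have hdW := hd.unique hE
  -- coordinate dynamic equations
  have hd0 := congrFun (hdyn t) 0
  have hd1 := congrFun (hdyn t) 1
  have hd2 := congrFun (hdyn t) 2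
  have hm0 := congrFun (hMdyn t) 0
  have hm1 := congrFun (hMdyn t) 1
  have hm2 := congrFun (hMdyn t) 2
  have hs01 : P 1 0 = P 0 1 := hPsymm.apply 0 1
  have hs02 : P 2 0 = P 0 2 := hPsymm.apply 0 2
  have hs12 : P 2 1 = P 1 2 := hPsymm.apply 1 2
  simp [hJ, hD, hK, Matrix.mulVec_diagonal, eR, vee, Matrix.smul_apply, Matrix.sub_apply,
    Matrix.mul_apply, Matrix.transpose_apply, Fin.sum_univ_three, smul_eq_mul,
    Matrix.vecHead, Matrix.vecTail, hs01, hs02, hs12] at hd0 hd1 hd2 hm0 hm1 hm2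
  have hkey : d = -(kω * (eω t ⬝ᵥ eω t)) + eω t ⬝ᵥ Me t - Me' t ⬝ᵥ (D *ᵥ Me' t) := by
    rw [hdW]
    simp [hD, Matrix.mulVec_diagonal, dotProduct, Fin.sum_univ_three, Matrix.mul_apply, hat,
      hs01, hs02, hs12]
    linear_combination (eω t 0) * hd0 + (eω t 1) * hd1 + (eω t 2) * hd2
      + (Me' t 0) * hm0 + (Me' t 1) * hm1 + (Me' t 2) * hm2
  rw [hkey]
  have ha : (0:ℝ) ≤ _root_.enorm (eω t) := Real.sqrt_nonneg _
  have hb := hMebound t ht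
  have hsq := enorm_mul_self (eω t)
  have htrans : eω t ⬝ᵥ Me t ≤ _root_.enorm (eω t) * (M₀ * Real.exp (-lam * t)) :=
    le_trans (dot_le_enorm_mul (eω t) (Me t)) (mul_le_mul_of_nonneg_left hb ha)
  have h5 : kω * (eω t ⬝ᵥ eω t) = kω * (_root_.enorm (eω t) * _root_.enorm (eω t)) := by rw [hsq]
  nlinarith [htrans, h5]
end
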